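/- Let f : ℝⁿ → ℝ be convex differentiable with L-Lipschitz gradient, P₁, P₂ : ℝⁿ → ℝ convex with P = P₁ − P₂, M ⪰ L·I symmetric positive definite. Let ξᵗ ∈ ∂P₂(xᵗ), yᵗ = xᵗ + β_t(xᵗ − xᵗ⁻¹) with β_t ∈ [0,1), and let xᵗ⁺¹ minimize y ↦ ⟨∇f(yᵗ) − ξᵗ, y⟩ + (1/2)‖y − yᵗ‖²_M + P₁(y). Then f(xᵗ⁺¹) + P(xᵗ⁺¹) ≤ f(xᵗ) + P(xᵗ) + (1/2)‖xᵗ − yᵗ‖²_M − (1/2)‖xᵗ⁺¹ − xᵗ‖²_M. -/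

import Mathlib

open scoped RealInnerProductSpace

private lemma line_hasDerivAt {n : ℕ} (y v : EuclideanSpace ℝ (Fin n)) (t : ℝ) :
    HasDerivAt (fun s : ℝ => y + s • v) v t := by
  simpa using ((hasDerivAt_id t).smul_const v).const_add y

private lemma comp_line_hasDerivAt {n : ℕ} {f : EuclideanSpace ℝ (Fin n) → ℝ}
    {f' : EuclideanSpace ℝ (Fin n) → EuclideanSpace ℝ (Fin n)}
    (hfdiff : ∀ x, HasGradientAt f (f' x) x)
    (y v : EuclideanSpace ℝ (Fin n)) (t : ℝ) :
    HasDerivAt (fun s : ℝ => f (y + s • v)) ⟪f' (y + t • v), v⟫ t := by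
  have h1 := line_hasDerivAt y v t
  have h2 := (hfdiff (y + t • v)).hasFDerivAt
  have := h2.comp_hasDerivAt t h1
  simpa [Function.comp_def] using this

private lemma aux_convex_grad {n : ℕ} {f : EuclideanSpace ℝ (Fin n) → ℝ}
    {f' : EuclideanSpace ℝ (Fin n) → EuclideanSpace ℝ (Fin n)}
    (hfconv : ConvexOn ℝ Set.univ f)
    (hfdiff : ∀ x, HasGradientAt f (f' x) x)
    (x y : EuclideanSpace ℝ (Fin n)) :
    f y + ⟪f' y, x - y⟫ ≤ f x := by
  set φ : ℝ → ℝ := fun t => f (y + t • (x - y)) with hφ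
  have hφconv : ConvexOn ℝ Set.univ φ := by
    have := hfconv.comp_affineMap (AffineMap.lineMap y x)
    have heq : φ = f ∘ (AffineMap.lineMap y x) := by
      funext t
      simp [hφ, AffineMap.lineMap_apply]
      congr 1
      abel
    rw [heq]
    simpa using this
  have hd0 : HasDerivAt φ ⟪f' (y + (0:ℝ) • (x - y)), x - y⟫ 0 :=
    comp_line_hasDerivAt hfdiff y (x - y) 0
  have hslope := hφconv.le_slope_of_hasDerivAt (Set.mem_univ 0) (Set.mem_univ 1)
    zero_lt_one hd0
  have h0 : φ 0 = f y := by simp [hφ]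
  have h1 : φ 1 = f x := by simp [hφ]
  have hs : slope φ 0 1 = φ 1 - φ 0 := by simp [slope_def_field]
  rw [hs, h0, h1] at hslope
  simp only [zero_smul, add_zero] at hslope
  linarith

private lemma aux_descent {n : ℕ} {f : EuclideanSpace ℝ (Fin n) → ℝ}
    {f' : EuclideanSpace ℝ (Fin n) → EuclideanSpace ℝ (Fin n)} {L : ℝ}
    (hfdiff : ∀ x, HasGradientAt f (f' x) x)
    (hflip : ∀ x y, ‖f' x - f' y‖ ≤ L * ‖x - y‖)
    (x y : EuclideanSpace ℝ (Fin n)) :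
    f x ≤ f y + ⟪f' y, x - y⟫ + L / 2 * ‖x - y‖ ^ 2 := by
  set v := x - y with hv
  set ψ : ℝ → ℝ := fun t => f (y + t • v) - t * ⟪f' y, v⟫ - L * t ^ 2 / 2 * ‖v‖ ^ 2 with hψ
  have hψd : ∀ t : ℝ, HasDerivAt ψ
      (⟪f' (y + t • v), v⟫ - ⟪f' y, v⟫ - L * t * ‖v‖ ^ 2) t := by
    intro t
    have h1 := comp_line_hasDerivAt hfdiff y v t
    have h2 : HasDerivAt (fun s : ℝ => s * ⟪f' y, v⟫) ⟪f' y, v⟫ t := by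
      simpa using (hasDerivAt_id t).mul_const ⟪f' y, v⟫
    have h3 : HasDerivAt (fun s : ℝ => L * s ^ 2 / 2 * ‖v‖ ^ 2) (L * t * ‖v‖ ^ 2) t := by
      have : HasDerivAt (fun s : ℝ => s ^ 2) (2 * t) t := by
        simpa using hasDerivAt_pow 2 t
      have := ((this.const_mul L).div_const 2).mul_const (‖v‖ ^ 2)
      exact this.congr_deriv (by ring)
    exact (h1.sub h2).sub h3
  have hanti : AntitoneOn ψ (Set.Icc 0 1) := by
    apply antitoneOn_of_deriv_nonpos (convex_Icc 0 1)
    · exact fun t _ => ((hψd t).differentiableAt.continuousAt).continuousWithinAt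
    · exact fun t _ => ((hψd t).differentiableAt).differentiableWithinAt
    · intro t ht
      rw [interior_Icc] at ht
      rw [(hψd t).deriv]
      have hlip := hflip (y + t • v) y
      have hn : ‖(y + t • v) - y‖ = t * ‖v‖ := by
        have : (y + t • v) - y = t • v := by abel
        rw [this, norm_smul, Real.norm_eq_abs, abs_of_pos ht.1]
      have hinner : ⟪f' (y + t • v) - f' y, v⟫ ≤ ‖f' (y + t • v) - f' y‖ * ‖v‖ :=
        real_inner_le_norm _ _
      have hb : ‖f' (y + t • v) - f' y‖ * ‖v‖ ≤ L * t * ‖v‖ ^ 2 := by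
        have := mul_le_mul_of_nonneg_right (hlip.trans_eq (by rw [hn])) (norm_nonneg v)
        calc ‖f' (y + t • v) - f' y‖ * ‖v‖ ≤ L * (t * ‖v‖) * ‖v‖ := this
          _ = L * t * ‖v‖ ^ 2 := by ring
      have hsub : ⟪f' (y + t • v), v⟫ - ⟪f' y, v⟫ = ⟪f' (y + t • v) - f' y, v⟫ := by
        rw [inner_sub_left]
      linarith
  have := hanti (Set.left_mem_Icc.mpr zero_le_one) (Set.right_mem_Icc.mpr zero_le_one)
    zero_le_one
  have h0 : ψ 0 = f y := by simp [hψ]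
  have h1 : ψ 1 = f x - ⟪f' y, v⟫ - L / 2 * ‖v‖ ^ 2 := by
    have hyx : y + (1:ℝ) • v = x := by rw [hv, one_smul]; abel
    simp only [hψ, hyx, one_pow, one_mul]
    ring
  rw [h0, h1] at this
  linarith

theorem stmt_12 {n : ℕ}
    (M : EuclideanSpace ℝ (Fin n) →L[ℝ] EuclideanSpace ℝ (Fin n))
    (hMsym : IsSelfAdjoint M)
    (hMpd : ∀ z, z ≠ 0 → 0 < ⟪M z, z⟫)
    (L : ℝ) (hL : 0 < L)
    (hML : ∀ z, L * ‖z‖ ^ 2 ≤ ⟪M z, z⟫)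
    (f : EuclideanSpace ℝ (Fin n) → ℝ)
    (f' : EuclideanSpace ℝ (Fin n) → EuclideanSpace ℝ (Fin n))
    (hfconv : ConvexOn ℝ Set.univ f)
    (hfdiff : ∀ x, HasGradientAt f (f' x) x)
    (hflip : ∀ x y, ‖f' x - f' y‖ ≤ L * ‖x - y‖)
    (P₁ P₂ P : EuclideanSpace ℝ (Fin n) → ℝ)
    (hP₁ : ConvexOn ℝ Set.univ P₁) (hP₂ : ConvexOn ℝ Set.univ P₂)
    (hP : ∀ x, P x = P₁ x - P₂ x)
    (xt xtm1 yt ξt xtp1 : EuclideanSpace ℝ (Fin n))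
    (βt : ℝ) (hβt : 0 ≤ βt) (hβt1 : βt < 1)
    (hξ : ∀ v, P₂ v ≥ P₂ xt + ⟪ξt, v - xt⟫)
    (hy : yt = xt + βt • (xt - xtm1))
    (hmin : ∀ z, ⟪f' yt - ξt, xtp1⟫ + (1/2) * ⟪M (xtp1 - yt), xtp1 - yt⟫ + P₁ xtp1 ≤
      ⟪f' yt - ξt, z⟫ + (1/2) * ⟪M (z - yt), z - yt⟫ + P₁ z) :
    f xtp1 + P xtp1 ≤ f xt + P xt + (1/2) * ⟪M (xt - yt), xt - yt⟫
      - (1/2) * ⟪M (xtp1 - xt), xtp1 - xt⟫ := by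
  have hQnn : ∀ a : EuclideanSpace ℝ (Fin n), 0 ≤ ⟪M a, a⟫ := fun a =>
    le_trans (by positivity) (hML a)
  -- quadratic expansion (pure bilinearity)
  have hquad : ∀ (a b : EuclideanSpace ℝ (Fin n)) (t : ℝ),
      ⟪M ((1-t) • a + t • b), (1-t) • a + t • b⟫
        = (1-t) * ⟪M a, a⟫ + t * ⟪M b, b⟫ - t * (1-t) * ⟪M (a-b), a-b⟫ := by
    intro a b t
    simp only [map_add, map_smul, map_sub, inner_add_left, inner_add_right,
      inner_sub_left, inner_sub_right, real_inner_smul_left, real_inner_smul_right]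
    ring
  -- strong minimality at z = xt
  have hsmin : ⟪f' yt - ξt, xtp1⟫ + (1/2) * ⟪M (xtp1 - yt), xtp1 - yt⟫ + P₁ xtp1
      + (1/2) * ⟪M (xtp1 - xt), xtp1 - xt⟫
      ≤ ⟪f' yt - ξt, xt⟫ + (1/2) * ⟪M (xt - yt), xt - yt⟫ + P₁ xt := by
    set c := ⟪M (xtp1 - xt), xtp1 - xt⟫ with hc
    set G := ⟪f' yt - ξt, xt⟫ + (1/2) * ⟪M (xt - yt), xt - yt⟫ + P₁ xt with hG
    set A := ⟪f' yt - ξt, xtp1⟫ + (1/2) * ⟪M (xtp1 - yt), xtp1 - yt⟫ + P₁ xtp1 with hA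
    have key : ∀ t ∈ Set.Ioo (0:ℝ) 1, A + (1/2) * c ≤ G + t * ((1/2) * c) := by
      intro t ht
      set m := (1-t) • xtp1 + t • xt with hm
      have hmy : m - yt = (1-t) • (xtp1 - yt) + t • (xt - yt) := by
        rw [hm]; module
      have hq : ⟪M (m - yt), m - yt⟫
          = (1-t) * ⟪M (xtp1 - yt), xtp1 - yt⟫ + t * ⟪M (xt - yt), xt - yt⟫
            - t * (1-t) * c := by
        rw [hmy, hquad]
        congr 2
        rw [hc]
        congr 1 <;> abel
      have hlin : ⟪f' yt - ξt, m⟫ = (1-t) * ⟪f' yt - ξt, xtp1⟫ + t * ⟪f' yt - ξt, xt⟫ := by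
        rw [hm, inner_add_right, real_inner_smul_right, real_inner_smul_right]
      have hP1m : P₁ m ≤ (1-t) * P₁ xtp1 + t * P₁ xt :=
        hP₁.2 (Set.mem_univ xtp1) (Set.mem_univ xt) (by linarith [ht.2]) (le_of_lt ht.1)
          (by ring)
      have hmin' := hmin m
      rw [hlin, hq] at hmin'
      have ht0 := ht.1
      nlinarith [hmin', hP1m, ht.1, ht.2]
    have hlim : Filter.Tendsto (fun t : ℝ => G + t * ((1/2) * c)) (nhdsWithin 0 (Set.Ioi 0))
        (nhds (G + 0 * ((1/2) * c))) := by
      apply Filter.Tendsto.mono_left _ nhdsWithin_le_nhds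
      exact (continuous_const.add (continuous_id.mul continuous_const)).tendsto 0
    have hev : ∀ᶠ t in nhdsWithin (0:ℝ) (Set.Ioi 0), A + (1/2) * c ≤ G + t * ((1/2) * c) := by
      filter_upwards [Ioo_mem_nhdsGT_of_mem (Set.mem_Ico.mpr ⟨le_refl (0:ℝ), zero_lt_one⟩)]
        with t ht using key t ht
    have := ge_of_tendsto hlim hev
    simpa using this
  have hdesc := aux_descent hfdiff hflip xtp1 yt
  have hconv := aux_convex_grad hfconv hfdiff xt yt
  have hml := hML (xtp1 - yt)
  have hxi := hξ xtp1
  rw [hP, hP]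
  simp only [inner_sub_left, inner_sub_right] at hdesc hconv hxi hsmin hml ⊢
  linarith
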